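/- Let t ≥ 1, and let F = (f₁, …, f_m) be a vectorial (2t, m)-bent function given by components f_i : (Fin (2t) → ZMod 2) → ZMod 2 with f_i(0) = 0 for each i; that is, for every nonzero v ∈ Z_2^m the linear combination Σ_i v_i f_i is a bent function (Nl(Σ_i v_i f_i) = 2^{2t−1} − 2^{t−1}). Let Ω_i be the support of f_i. Then for every nonempty index subset I ⊆ {1, …, m}, the Cayley graph Cay(Z_2^{2t}, △_{i∈I} Ω_i), whose distinct vertices u, v are adjacent iff u + v lies in the symmetric difference △_{i∈I} Ω_i, is a strongly regular graph with λ = μ: it satisfies IsSRGWith 2^{2t} k λ λ for some k and λ. -/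
import Mathlib


/-- The nonlinearity of a Boolean function `f`: the minimum Hamming distance from `f`
to an affine function `x ↦ a·x + c`. -/
noncomputable def nonlinearity {n : ℕ} (f : (Fin n → ZMod 2) → ZMod 2) : ℕ :=
  sInf {d : ℕ | ∃ (a : Fin n → ZMod 2) (c : ZMod 2),
    d = (Finset.univ.filter (fun x : Fin n → ZMod 2 =>
      f x ≠ (∑ i, a i * x i) + c)).card}

/-- The Cayley graph of `Z_2^{2t}` whose connection set is the symmetric difference
`△_{i∈I} Ω_i` of the supports of the `f i`, `i ∈ I`: distinct `u`, `v` are adjacent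
iff `u + v` belongs to an odd number of the supports `Ω_i`, `i ∈ I`. -/
def symmDiffCayleyGraph {n m : ℕ} (f : Fin m → (Fin n → ZMod 2) → ZMod 2)
    (I : Finset (Fin m)) : SimpleGraph (Fin n → ZMod 2) :=
  SimpleGraph.fromRel (fun u v => Odd (I.filter (fun i => f i (u + v) = 1)).card)


instance {n m : ℕ} (f : Fin m → (Fin n → ZMod 2) → ZMod 2) (I : Finset (Fin m)) :
    DecidableRel (symmDiffCayleyGraph f I).Adj := fun u v =>
  inferInstanceAs (Decidable (u ≠ v ∧
    (Odd (I.filter (fun i => f i (u + v) = 1)).card ∨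
     Odd (I.filter (fun i => f i (v + u) = 1)).card)))

namespace BSRG
open Finset

def chi (x : ZMod 2) : ℤ := if x = 0 then 1 else -1

lemma chi_add : ∀ x y : ZMod 2, chi (x + y) = chi x * chi y := by decide

lemma chi_zero : chi 0 = 1 := rfl
lemma chi_one : chi 1 = -1 := rfl

variable {n : ℕ}

lemma addself (v : Fin n → ZMod 2) : v + v = 0 := by
  funext i; exact CharTwo.add_self_eq_zero _

lemma negself (v : Fin n → ZMod 2) : -v = v := neg_eq_of_add_eq_zero_left (addself v)

def dot (a x : Fin n → ZMod 2) : ZMod 2 := ∑ i, a i * x i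

lemma dot_zero_right (a : Fin n → ZMod 2) : dot a 0 = 0 := by simp [dot]

lemma dot_add_right (a x y : Fin n → ZMod 2) : dot a (x + y) = dot a x + dot a y := by
  simp [dot, mul_add, Finset.sum_add_distrib]

lemma dot_add_left (a b s : Fin n → ZMod 2) : dot (a + b) s = dot a s + dot b s := by
  simp [dot, add_mul, Finset.sum_add_distrib]

lemma card_V : Fintype.card (Fin n → ZMod 2) = 2 ^ n := by
  simp [Fintype.card_fun, ZMod.card]

lemma sum_chi_dot (s : Fin n → ZMod 2) :
    ∑ a : Fin n → ZMod 2, chi (dot a s) = if s = 0 then (2:ℤ) ^ n else 0 := by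
  split_ifs with h
  · subst h
    simp [dot_zero_right, chi_zero, Finset.card_univ, card_V]
  · obtain ⟨j, hj⟩ : ∃ j, s j ≠ 0 := by
      by_contra hc; push_neg at hc; exact h (funext hc)
    have hj1 : s j = 1 := by
      rcases (show ∀ b : ZMod 2, b = 0 ∨ b = 1 by decide) (s j) with hb | hb
      · exact absurd hb hj
      · exact hb
    set e : Fin n → ZMod 2 := fun i => if i = j then 1 else 0 with he
    have hdote : dot e s = 1 := by
      simp only [dot, he, ite_mul, one_mul, zero_mul]
      rw [Finset.sum_ite_eq' Finset.univ j s]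
      simp [hj1]
    have hkey : ∑ a : Fin n → ZMod 2, chi (dot a s)
        = ∑ a : Fin n → ZMod 2, chi (dot (a + e) s) :=
      (Fintype.sum_equiv (Equiv.addRight e) (fun a => chi (dot (a + e) s))
        (fun a => chi (dot a s)) (fun a => rfl)).symm
    have h2 : ∑ a : Fin n → ZMod 2, chi (dot (a + e) s)
        = -∑ a : Fin n → ZMod 2, chi (dot a s) := by
      rw [← Finset.sum_neg_distrib]
      refine Finset.sum_congr rfl fun a _ => ?_
      rw [dot_add_left, hdote, chi_add, chi_one]
      ring
    rw [h2] at hkey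
    linarith

def Wal (g : (Fin n → ZMod 2) → ZMod 2) (a : Fin n → ZMod 2) : ℤ :=
  ∑ x : Fin n → ZMod 2, chi (g x + dot a x)

lemma key (g : (Fin n → ZMod 2) → ZMod 2) (s : Fin n → ZMod 2) :
    ∑ a : Fin n → ZMod 2, (Wal g a)^2 * chi (dot a s)
      = (2:ℤ) ^ n * ∑ x : Fin n → ZMod 2, chi (g x + g (x + s)) := by
  have step1 : ∀ a : Fin n → ZMod 2, (Wal g a)^2 * chi (dot a s)
      = ∑ x : Fin n → ZMod 2, ∑ y : Fin n → ZMod 2,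
          chi (g x + g y) * chi (dot a (x + y + s)) := by
    intro a
    rw [sq, Wal, Finset.sum_mul_sum, Finset.sum_mul]
    refine Finset.sum_congr rfl fun x _ => ?_
    rw [Finset.sum_mul]
    refine Finset.sum_congr rfl fun y _ => ?_
    simp only [dot_add_right, chi_add]
    ring
  rw [Finset.sum_congr rfl fun a _ => step1 a, Finset.sum_comm, Finset.mul_sum]
  refine Finset.sum_congr rfl fun x _ => ?_
  rw [Finset.sum_comm]
  have hinner : ∀ y, ∑ a : Fin n → ZMod 2, chi (g x + g y) * chi (dot a (x + y + s))
      = chi (g x + g y) * (if x + y + s = 0 then (2:ℤ)^n else 0) := by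
    intro y; rw [← Finset.mul_sum, sum_chi_dot]
  rw [Finset.sum_congr rfl fun y _ => hinner y]
  have hiff : ∀ y : Fin n → ZMod 2, x + y + s = 0 ↔ y = x + s := by
    intro y
    rw [show x + y + s = y + (x + s) by abel, add_eq_zero_iff_eq_neg, negself]
  simp only [hiff, mul_ite, mul_zero, Finset.sum_ite_eq', Finset.mem_univ, if_true]
  ring

lemma parseval (g : (Fin n → ZMod 2) → ZMod 2) :
    ∑ a : Fin n → ZMod 2, (Wal g a)^2 = (2:ℤ) ^ n * 2 ^ n := by
  have h := key g 0
  simp only [dot_zero_right, chi_zero, mul_one, add_zero, CharTwo.add_self_eq_zero,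
    Finset.sum_const, Finset.card_univ, card_V, nsmul_eq_mul] at h
  rw [h]; push_cast; ring

lemma sum_chi_pair (h k : (Fin n → ZMod 2) → ZMod 2) :
    ∑ x : Fin n → ZMod 2, chi (h x + k x)
      = (2:ℤ) ^ n - 2 * (Finset.univ.filter fun x => h x ≠ k x).card := by
  have hx : ∀ u v : ZMod 2, chi (u + v) = if u ≠ v then (-1:ℤ) else 1 := by decide
  rw [Finset.sum_congr rfl fun x _ => hx (h x) (k x), Finset.sum_ite,
    Finset.sum_const, Finset.sum_const]
  have hsplit := Finset.card_filter_add_card_filter_not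
    (s := (Finset.univ : Finset (Fin n → ZMod 2))) (p := fun x => h x ≠ k x)
  rw [Finset.card_univ, card_V] at hsplit
  simp only [nsmul_eq_mul]
  have hz : (((Finset.univ.filter fun x => h x ≠ k x).card : ℤ))
      + ((Finset.univ.filter fun x => ¬ h x ≠ k x).card : ℤ) = 2 ^ n := by
    exact_mod_cast hsplit
  push_cast
  linarith

lemma natCast_two_eq_one_iff_odd (c : ℕ) : (c : ZMod 2) = 1 ↔ Odd c := by
  rw [Nat.odd_iff, ← ZMod.natCast_mod c 2]
  rcases Nat.mod_two_eq_zero_or_one c with h | h <;> rw [h] <;> decide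

theorem bent_srg_aux (t : ℕ) (ht : 1 ≤ t) (g : (Fin (2*t) → ZMod 2) → ZMod 2)
    (hg0 : g 0 = 0)
    (hd : ∀ (a : Fin (2*t) → ZMod 2) (c : ZMod 2),
      2 ^ (2*t-1) - 2 ^ (t-1) ≤ (Finset.univ.filter (fun x : Fin (2*t) → ZMod 2 =>
        g x ≠ (∑ i, a i * x i) + c)).card)
    (G : SimpleGraph (Fin (2*t) → ZMod 2)) [DecidableRel G.Adj]
    (hAdj : ∀ u w, G.Adj u w ↔ g (u + w) = 1) :
    ∃ k lam : ℕ, G.IsSRGWith (2 ^ (2*t)) k lam lam := by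
  -- each Walsh coefficient squared is at most 2^(2*t)
  have hW2 : ∀ a : Fin (2*t) → ZMod 2, (Wal g a)^2 ≤ (2:ℤ)^(2*t) := by
    intro a
    obtain ⟨d, hdd⟩ : ∃ d : ℕ,
        (Finset.univ.filter fun x : Fin (2*t) → ZMod 2 => g x ≠ dot a x).card = d := ⟨_, rfl⟩
    have hWd : Wal g a = (2:ℤ)^(2*t) - 2 * d := by
      have h := sum_chi_pair g (fun x => dot a x)
      rw [hdd] at h
      exact h
    have e1 : (Finset.univ.filter (fun x : Fin (2*t) → ZMod 2 =>
        g x ≠ (∑ i, a i * x i) + 1)).card = 2^(2*t) - d := by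
      have hset : (Finset.univ.filter (fun x : Fin (2*t) → ZMod 2 =>
          g x ≠ (∑ i, a i * x i) + 1))
          = Finset.univ.filter (fun x : Fin (2*t) → ZMod 2 => ¬ (g x ≠ dot a x)) := by
        apply Finset.filter_congr; intro x _
        have hz : ∀ u v : ZMod 2, (u ≠ v + 1) ↔ ¬ (u ≠ v) := by decide
        simpa [dot] using hz (g x) (dot a x)
      rw [hset]
      have hsplit := Finset.card_filter_add_card_filter_not
        (s := (Finset.univ : Finset (Fin (2*t) → ZMod 2))) (p := fun x => g x ≠ dot a x)
      rw [Finset.card_univ, card_V, hdd] at hsplit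
      clear hset hWd
      omega
    have e0 : (Finset.univ.filter (fun x : Fin (2*t) → ZMod 2 =>
        g x ≠ (∑ i, a i * x i) + 0)).card = d := by
      rw [← hdd]; congr 1; apply Finset.filter_congr; intro x _
      simp [dot]
    have h0' := hd a 0
    have h1' := hd a 1
    rw [e0] at h0'
    rw [e1] at h1'
    clear e0 e1
    have hpow : 2^(t-1) ≤ 2^((2*t)-1) := Nat.pow_le_pow_right (by norm_num) (by omega)
    have hdle : d ≤ 2^(2*t) := by
      have := Finset.card_filter_le (Finset.univ : Finset (Fin (2*t) → ZMod 2))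
        (fun x => g x ≠ dot a x)
      rwa [Finset.card_univ, card_V, hdd] at this
    have h2n : (2:ℤ)^(2*t) = 2 * 2^((2*t)-1) := by
      rw [← pow_succ']; congr 1; omega
    have h2t : (2:ℤ)^t = 2 * 2^(t-1) := by
      rw [← pow_succ']; congr 1; omega
    have hnt : (2:ℤ)^(2*t) = 2^t * 2^t := by
      rw [← pow_add]; congr 1; omega
    have hl : (2:ℤ)^((2*t)-1) - 2^(t-1) ≤ d := by
      have : ((2^((2*t)-1) - 2^(t-1) : ℕ) : ℤ) ≤ (d : ℤ) := by exact_mod_cast h0'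
      rwa [Nat.cast_sub hpow, Nat.cast_pow, Nat.cast_pow] at this
    have hu : (d:ℤ) ≤ 2^((2*t)-1) + 2^(t-1) := by
      have h1z : ((2^((2*t)-1) - 2^(t-1) : ℕ) : ℤ) ≤ ((2^(2*t) - d : ℕ) : ℤ) := by
        exact_mod_cast h1'
      rw [Nat.cast_sub hpow, Nat.cast_sub hdle] at h1z
      push_cast at h1z
      linarith
    have habs : -(2:ℤ)^t ≤ Wal g a ∧ Wal g a ≤ 2^t := by
      constructor <;> rw [hWd] <;> linarith
    calc (Wal g a)^2 ≤ ((2:ℤ)^t)^2 := sq_le_sq' habs.1 habs.2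
      _ = (2:ℤ)^(2*t) := by rw [sq]; exact hnt.symm
  -- hence all Walsh coefficients squared equal 2^(2*t)
  have hWeq : ∀ a : Fin (2*t) → ZMod 2, (Wal g a)^2 = (2:ℤ)^(2*t) := by
    by_contra hc
    push_neg at hc
    obtain ⟨b, hb⟩ := hc
    have hlt : ∑ a : Fin (2*t) → ZMod 2, (Wal g a)^2
        < ∑ _a : Fin (2*t) → ZMod 2, (2:ℤ)^(2*t) :=
      Finset.sum_lt_sum (fun a _ => hW2 a)
        ⟨b, Finset.mem_univ b, lt_of_le_of_ne (hW2 b) hb⟩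
    rw [parseval] at hlt
    rw [Finset.sum_const, Finset.card_univ, card_V, nsmul_eq_mul] at hlt
    push_cast at hlt
    exact absurd hlt (lt_irrefl _)
  -- derivatives are balanced
  have hbal : ∀ s : Fin (2*t) → ZMod 2, s ≠ 0 →
      (Finset.univ.filter fun x : Fin (2*t) → ZMod 2 => g x ≠ g (x + s)).card = 2^((2*t)-1) := by
    intro s hs
    have hk := key g s
    simp only [hWeq] at hk
    rw [← Finset.mul_sum, sum_chi_dot, if_neg hs, mul_zero] at hk
    have h2 : (2:ℤ)^(2*t) ≠ 0 := by positivity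
    have hzero : ∑ x : Fin (2*t) → ZMod 2, chi (g x + g (x + s)) = 0 :=
      (mul_eq_zero.mp hk.symm).resolve_left h2
    rw [sum_chi_pair g (fun x => g (x + s))] at hzero
    have h2n : (2:ℤ)^(2*t) = 2 * 2^((2*t)-1) := by
      rw [← pow_succ']; congr 1; omega
    have : ((Finset.univ.filter fun x : Fin (2*t) → ZMod 2 => g x ≠ g (x + s)).card : ℤ)
        = 2^((2*t)-1) := by linarith
    exact_mod_cast this
  -- counting common neighbours
  obtain ⟨k, hk⟩ : ∃ k : ℕ,
      (Finset.univ.filter fun x : Fin (2*t) → ZMod 2 => g x = 1).card = k := ⟨_, rfl⟩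
  have hA : ∀ s : Fin (2*t) → ZMod 2, s ≠ 0 →
      (Finset.univ.filter fun x : Fin (2*t) → ZMod 2 => g x = 1 ∧ g (x + s) = 1).card
        + 2^((2*t)-2) = k := by
    intro s hs
    have hAB := Finset.card_filter_add_card_filter_not
      (s := Finset.univ.filter fun x : Fin (2*t) → ZMod 2 => g x = 1)
      (p := fun x => g (x + s) = 1)
    rw [Finset.filter_filter, Finset.filter_filter, hk] at hAB
    have hDsplit := Finset.card_filter_add_card_filter_not
      (s := Finset.univ.filter fun x : Fin (2*t) → ZMod 2 => g x ≠ g (x + s))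
      (p := fun x => g x = 1)
    rw [Finset.filter_filter, Finset.filter_filter, hbal s hs] at hDsplit
    have z1 : ∀ u v : ZMod 2, ((u ≠ v ∧ u = 1) ↔ (u = 1 ∧ ¬ v = 1)) := by decide
    have z2 : ∀ u v : ZMod 2, ((u ≠ v ∧ ¬ u = 1) ↔ (¬ u = 1 ∧ v = 1)) := by decide
    have eB : Finset.univ.filter (fun x : Fin (2*t) → ZMod 2 => g x ≠ g (x + s) ∧ g x = 1)
        = Finset.univ.filter (fun x => g x = 1 ∧ ¬ g (x + s) = 1) :=
      Finset.filter_congr fun x _ => z1 (g x) (g (x + s))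
    have eC : Finset.univ.filter (fun x : Fin (2*t) → ZMod 2 => g x ≠ g (x + s) ∧ ¬ g x = 1)
        = Finset.univ.filter (fun x => ¬ g x = 1 ∧ g (x + s) = 1) :=
      Finset.filter_congr fun x _ => z2 (g x) (g (x + s))
    rw [eB, eC] at hDsplit
    have hBC : (Finset.univ.filter
          (fun x : Fin (2*t) → ZMod 2 => g x = 1 ∧ ¬ g (x + s) = 1)).card
        = (Finset.univ.filter
          (fun x : Fin (2*t) → ZMod 2 => ¬ g x = 1 ∧ g (x + s) = 1)).card := by
      apply Finset.card_bij' (fun x _ => x + s) (fun y _ => y + s)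
      · intro x hx
        simp only [Finset.mem_filter, Finset.mem_univ, true_and] at hx ⊢
        rw [show x + s + s = x by rw [add_assoc, addself, add_zero]]
        exact ⟨hx.2, hx.1⟩
      · intro y hy
        simp only [Finset.mem_filter, Finset.mem_univ, true_and] at hy ⊢
        rw [show y + s + s = y by rw [add_assoc, addself, add_zero]]
        exact ⟨hy.2, hy.1⟩
      · intro x _; rw [add_assoc, addself, add_zero]
      · intro y _; rw [add_assoc, addself, add_zero]
    have h2n2 : 2^((2*t)-1) = 2 * 2^((2*t)-2) := by
      rw [← pow_succ']; congr 1; omega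
    omega
  refine ⟨k, k - 2^((2*t)-2), ?_⟩
  have hcommon : ∀ u v : Fin (2*t) → ZMod 2, u ≠ v →
      Fintype.card (G.commonNeighbors u v) = k - 2^((2*t)-2) := by
    intro u v huv
    have hs : u + v ≠ 0 := by
      intro h
      have h2 : u + (u + v) = u + 0 := by rw [h]
      rw [← add_assoc, addself, zero_add, add_zero] at h2
      exact huv h2.symm
    have hset : Fintype.card (G.commonNeighbors u v)
        = (Finset.univ.filter fun w => G.Adj u w ∧ G.Adj v w).card := by
      rw [← Set.toFinset_card]
      congr 1
      ext w
      simp [Set.mem_toFinset, SimpleGraph.mem_commonNeighbors]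
    have hbij : (Finset.univ.filter fun w => G.Adj u w ∧ G.Adj v w).card
        = (Finset.univ.filter fun x : Fin (2*t) → ZMod 2 =>
            g x = 1 ∧ g (x + (u + v)) = 1).card := by
      apply Finset.card_bij' (fun w _ => u + w) (fun x _ => u + x)
      · intro w hw
        simp only [Finset.mem_filter, Finset.mem_univ, true_and, hAdj] at hw ⊢
        refine ⟨hw.1, ?_⟩
        rw [show u + w + (u + v) = v + w by
          rw [show u + w + (u + v) = (u + u) + (v + w) by abel, addself, zero_add]]
        exact hw.2
      · intro x hx
        simp only [Finset.mem_filter, Finset.mem_univ, true_and, hAdj] at hx ⊢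
        constructor
        · rw [show u + (u + x) = x by rw [← add_assoc, addself, zero_add]]
          exact hx.1
        · rw [show v + (u + x) = x + (u + v) by abel]
          exact hx.2
      · intro w _; rw [← add_assoc, addself, zero_add]
      · intro x _; rw [← add_assoc, addself, zero_add]
    rw [hset, hbij]
    have := hA (u + v) hs
    omega
  constructor
  · exact card_V
  · intro u
    have hnb : G.neighborFinset u = Finset.univ.filter fun w => g (u + w) = 1 := by
      ext w
      rw [SimpleGraph.mem_neighborFinset, Finset.mem_filter]
      simp only [Finset.mem_univ, true_and]
      exact hAdj u w
    show (G.neighborFinset u).card = k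
    rw [hnb, ← hk]
    apply Finset.card_bij' (fun w _ => u + w) (fun x _ => u + x)
    · intro w hw
      simp only [Finset.mem_filter, Finset.mem_univ, true_and] at hw ⊢
      exact hw
    · intro x hx
      simp only [Finset.mem_filter, Finset.mem_univ, true_and] at hx ⊢
      rw [← add_assoc, addself, zero_add]
      exact hx
    · intro w _; rw [← add_assoc, addself, zero_add]
    · intro x _; rw [← add_assoc, addself, zero_add]
  · intro u w h
    exact hcommon u w (G.ne_of_adj h)
  · intro u w hne h'
    exact hcommon u w hne

end BSRG


theorem vectorial_bent_symmDiff_cayleyGraph_isSRG (t m : ℕ) (ht : 1 ≤ t)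
    (f : Fin m → (Fin (2 * t) → ZMod 2) → ZMod 2)
    (h0 : ∀ i, f i 0 = 0)
    (hbent : ∀ v : Fin m → ZMod 2, v ≠ 0 →
      nonlinearity (fun x => ∑ i, v i * f i x) = 2 ^ (2 * t - 1) - 2 ^ (t - 1))
    (I : Finset (Fin m)) (hI : I.Nonempty) :
    ∃ k lam : ℕ, (symmDiffCayleyGraph f I).IsSRGWith (2 ^ (2 * t)) k lam lam := by
  classical
  obtain ⟨j, hj⟩ := hI
  set g : (Fin (2*t) → ZMod 2) → ZMod 2 := fun x => ∑ i ∈ I, f i x with hgdef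
  set v : Fin m → ZMod 2 := fun i => if i ∈ I then 1 else 0 with hvdef
  have hv0 : v ≠ 0 := by
    intro h
    have := congrFun h j
    simp [hvdef, hj] at this
  have hfun : (fun x => ∑ i, v i * f i x) = g := by
    funext x
    simp only [hvdef, hgdef, ite_mul, one_mul, zero_mul]
    rw [Finset.sum_ite_mem, Finset.univ_inter]
  have hnl := hbent v hv0
  rw [hfun] at hnl
  have hg0 : g 0 = 0 := by
    simp [hgdef, h0]
  have hd : ∀ (a : Fin (2*t) → ZMod 2) (c : ZMod 2),
      2 ^ (2*t-1) - 2 ^ (t-1) ≤ (Finset.univ.filter (fun x : Fin (2*t) → ZMod 2 =>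
        g x ≠ (∑ i, a i * x i) + c)).card := by
    intro a c
    rw [← hnl]
    exact Nat.sInf_le ⟨a, c, rfl⟩
  have hcast : ∀ z : Fin (2*t) → ZMod 2,
      g z = ((I.filter fun i => f i z = 1).card : ZMod 2) := by
    intro z
    rw [hgdef]
    show (∑ i ∈ I, f i z) = ((I.filter fun i => f i z = 1).card : ZMod 2)
    have : ∀ i ∈ I, f i z = if f i z = 1 then (1 : ZMod 2) else 0 := by
      intro i _
      rcases (show ∀ u : ZMod 2, u = 0 ∨ u = 1 by decide) (f i z) with h | h <;> simp [h]
    rw [Finset.sum_congr rfl this, Finset.sum_boole]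
  have hodd : ∀ z : Fin (2*t) → ZMod 2,
      Odd (I.filter fun i => f i z = 1).card ↔ g z = 1 := by
    intro z
    rw [hcast z, BSRG.natCast_two_eq_one_iff_odd]
  have hAdj : ∀ u w, (symmDiffCayleyGraph f I).Adj u w ↔ g (u + w) = 1 := by
    intro u w
    rw [symmDiffCayleyGraph, SimpleGraph.fromRel_adj]
    constructor
    · rintro ⟨hne, h | h⟩
      · exact (hodd (u + w)).mp h
      · rw [add_comm w u] at h
        exact (hodd (u + w)).mp h
    · intro h
      refine ⟨?_, Or.inl ((hodd (u + w)).mpr h)⟩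
      intro he
      rw [he, BSRG.addself] at h
      rw [hg0] at h
      exact one_ne_zero h.symm
  exact BSRG.bent_srg_aux t ht g hg0 hd _ hAdj
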